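/- Let x_1, …, x_n ∈ ℝ^{2n} be linearly independent vectors spanning a Lagrangian subspace, i.e. x_iᵀ J x_j = 0 for all i, j. Then for K := X_R X_L⁺ one has K K^⋆ = 0 and K^⋆ K = 0, where K^⋆ := Jᵀ Kᵀ J. -/
import Mathlib


open Matrix

noncomputable section

/-- The canonical skew-symmetric matrix `J = [[0, I],[-I, 0]]`. -/
def Jmat (n : ℕ) : Matrix (Fin n ⊕ Fin n) (Fin n ⊕ Fin n) ℝ :=
  Matrix.fromBlocks 0 1 (-1) 0

/-- A matrix `H` is skew-Hamiltonian if `Jᵀ Hᵀ J = H`. -/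
def IsSkewHamiltonian {n : ℕ} (H : Matrix (Fin n ⊕ Fin n) (Fin n ⊕ Fin n) ℝ) : Prop :=
  (Jmat n)ᵀ * Hᵀ * Jmat n = H

/-- `X_L = [x_1 ⋯ x_{n-1}]`. -/
def XL {n : ℕ} (x : Fin n → (Fin n ⊕ Fin n) → ℝ) :
    Matrix (Fin n ⊕ Fin n) (Fin (n - 1)) ℝ :=
  Matrix.of fun i j => x ⟨j.1, lt_of_lt_of_le j.2 (Nat.sub_le n 1)⟩ i

/-- `X_R = [x_2 ⋯ x_n]`. -/
def XR {n : ℕ} (x : Fin n → (Fin n ⊕ Fin n) → ℝ) :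
    Matrix (Fin n ⊕ Fin n) (Fin (n - 1)) ℝ :=
  Matrix.of fun i j => x ⟨j.1 + 1, by have := j.2; omega⟩ i

/-- The Moore–Penrose pseudoinverse `X_L⁺ = (X_Lᵀ X_L)⁻¹ X_Lᵀ` of `X_L`
(for `X_L` with linearly independent columns). -/
def XLpinv {n : ℕ} (x : Fin n → (Fin n ⊕ Fin n) → ℝ) :
    Matrix (Fin (n - 1)) (Fin n ⊕ Fin n) ℝ :=
  ((XL x)ᵀ * XL x)⁻¹ * (XL x)ᵀ

/-- `Ĥ = X_R X_L⁺ + Jᵀ (X_R X_L⁺)ᵀ J`. -/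
def Hhat {n : ℕ} (x : Fin n → (Fin n ⊕ Fin n) → ℝ) :
    Matrix (Fin n ⊕ Fin n) (Fin n ⊕ Fin n) ℝ :=
  XR x * XLpinv x + (Jmat n)ᵀ * (XR x * XLpinv x)ᵀ * Jmat n

/-- `H` realizes the Krylov relations `H x_k = x_{k+1}`, `k = 1, …, n-1`. -/
def KrylovRel {n : ℕ} (H : Matrix (Fin n ⊕ Fin n) (Fin n ⊕ Fin n) ℝ)
    (x : Fin n → (Fin n ⊕ Fin n) → ℝ) : Prop :=
  ∀ k : Fin (n - 1), H *ᵥ x ⟨k.1, lt_of_lt_of_le k.2 (Nat.sub_le n 1)⟩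
    = x ⟨k.1 + 1, by have := k.2; omega⟩

lemma aux1 {n : ℕ} (x : Fin n → (Fin n ⊕ Fin n) → ℝ)
    (hLag : ∀ i j : Fin n, x i ⬝ᵥ (Jmat n *ᵥ x j) = 0) :
    (XL x)ᵀ * (Jmat n)ᵀ * XL x = 0 := by
  ext i j
  have h := hLag ⟨j.1, lt_of_lt_of_le j.2 (Nat.sub_le n 1)⟩
    ⟨i.1, lt_of_lt_of_le i.2 (Nat.sub_le n 1)⟩
  simp only [dotProduct, mulVec, Matrix.mul_apply, XL, Matrix.transpose_apply,
    Matrix.of_apply, Matrix.zero_apply] at h ⊢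
  rw [← h]
  refine Finset.sum_congr rfl fun l _ => ?_
  rw [Finset.sum_mul, Finset.mul_sum]
  exact Finset.sum_congr rfl fun k _ => by ring

lemma aux2 {n : ℕ} (x : Fin n → (Fin n ⊕ Fin n) → ℝ)
    (hLag : ∀ i j : Fin n, x i ⬝ᵥ (Jmat n *ᵥ x j) = 0) :
    (XR x)ᵀ * Jmat n * XR x = 0 := by
  ext i j
  have h := hLag ⟨i.1 + 1, by have := i.2; omega⟩ ⟨j.1 + 1, by have := j.2; omega⟩
  simp only [dotProduct, mulVec, Matrix.mul_apply, XR, Matrix.transpose_apply,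
    Matrix.of_apply, Matrix.zero_apply] at h ⊢
  rw [← h]
  simp only [Finset.sum_mul, Finset.mul_sum]
  rw [Finset.sum_comm]
  exact Finset.sum_congr rfl fun l _ => Finset.sum_congr rfl fun k _ => by ring

/-- For a basis of a Lagrangian subspace and `K = X_R X_L⁺`, one has
`K K^⋆ = K^⋆ K = 0` where `K^⋆ = Jᵀ Kᵀ J`. -/
theorem K_mul_Kstar_eq_zero {n : ℕ} (x : Fin n → (Fin n ⊕ Fin n) → ℝ)
    (hLI : LinearIndependent ℝ x)
    (hLag : ∀ i j : Fin n, x i ⬝ᵥ (Jmat n *ᵥ x j) = 0) :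
    (XR x * XLpinv x) * ((Jmat n)ᵀ * (XR x * XLpinv x)ᵀ * Jmat n) = 0 ∧
    ((Jmat n)ᵀ * (XR x * XLpinv x)ᵀ * Jmat n) * (XR x * XLpinv x) = 0 := by
  have h1 : ∀ (M : Matrix (Fin (n-1)) (Fin n ⊕ Fin n) ℝ),
      (XL x)ᵀ * ((Jmat n)ᵀ * (XL x * M)) = 0 := fun M => by
    rw [← Matrix.mul_assoc, ← Matrix.mul_assoc, aux1 x hLag, Matrix.zero_mul]
  have h2 : ∀ (M : Matrix (Fin (n-1)) (Fin n ⊕ Fin n) ℝ),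
      (XR x)ᵀ * (Jmat n * (XR x * M)) = 0 := fun M => by
    rw [← Matrix.mul_assoc, ← Matrix.mul_assoc, aux2 x hLag, Matrix.zero_mul]
  constructor
  · simp only [XLpinv, Matrix.transpose_mul, Matrix.transpose_transpose, Matrix.mul_assoc]
    rw [h1]
    simp [Matrix.mul_zero]
  · simp only [XLpinv, Matrix.transpose_mul, Matrix.transpose_transpose, Matrix.mul_assoc]
    rw [h2]
    simp [Matrix.mul_zero]
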